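/- Let H, K be Hopf algebras, C a (K,H)-bi-Galois co-object with Morita maps ∧ : C̄ ⊗_K C → H and ∨ : C ⊗_H C̄ → K. Let (H,K,A,C) be a Yetter-Drinfeld datum. If the canonical map can̄ : C ⊗ H → C ⊗ C, c ⊗ h ↦ c_{(1)} ⊗ (c_{(2)} ◁ h), is bijective, then for every M ∈ _A YD^C(H,K) and every left H-module V, the half-braid β_{V,M} : V ⊗ M → M ⊗ (C ⊗_H V), v ⊗ m ↦ m_{[0]} ⊗ m_{[1]} ⊗_H v, is invertible, with inverse m ⊗ c ⊗_H v ↦ (m_{[1]} ∧ c)·v ⊗ m_{[0]}. -/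
import Mathlib


open TensorProduct Coalgebra

variable {k : Type} [CommRing k]

/-- The `H`-balancing submodule of `C ⊗ₖ V`, whose quotient is `C ⊗_H V`. -/
def balancer (H : Type) [Ring H] [Algebra k H]
    (C : Type) [AddCommGroup C] [Module k C] (actR : C ⊗[k] H →ₗ[k] C)
    (V : Type) [AddCommGroup V] [Module k V] [Module H V] [IsScalarTower k H V] :
    Submodule k (C ⊗[k] V) :=
  Submodule.span k {x | ∃ (c : C) (h : H) (v : V), x = actR (c ⊗ₜ h) ⊗ₜ v - c ⊗ₜ (h • v)}

/-- The half-braid `β_{V,M} : V ⊗ M → M ⊗ (C ⊗ V)` at the level of `k`-modules. -/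
noncomputable def betaRaw {C M : Type} [AddCommGroup C] [Module k C] [AddCommGroup M] [Module k M]
    (ρ : M →ₗ[k] M ⊗[k] C)
    (V : Type) [AddCommGroup V] [Module k V] :
    V ⊗[k] M →ₗ[k] M ⊗[k] (C ⊗[k] V) :=
  (TensorProduct.assoc k M C V).toLinearMap ∘ₗ (LinearMap.rTensor V ρ) ∘ₗ
    (TensorProduct.comm k V M).toLinearMap

/-- The action of `H` on a left `H`-module as a `k`-linear map `H ⊗ₖ V → V`. -/
noncomputable def hAct (H : Type) [Ring H] [Algebra k H]
    (V : Type) [AddCommGroup V] [Module k V] [Module H V] [IsScalarTower k H V]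
    [SMulCommClass k H V] : H ⊗[k] V →ₗ[k] V :=
  TensorProduct.lift (LinearMap.mk₂ k (fun h v => h • v)
    (fun h h' v => add_smul h h' v) (fun c h v => smul_assoc c h v)
    (fun h v v' => smul_add h v v') (fun c h v => (smul_comm c h v).symm))

set_option maxHeartbeats 2000000 in
/-- Let `C` be a `(K,H)`-bi-Galois co-object with Morita maps `∧ = wedge` and
`∨ = vee` (given here at the level of `k`-modules, with their defining identities),
and let `(H,K,A,C)` be a Yetter-Drinfeld datum.  For every `M ∈ _A YD^C(H,K)` and
every left `H`-module `V`, the half-braid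
`β_{V,M} : V ⊗ M → M ⊗ (C ⊗_H V)`, `v ⊗ m ↦ m₍₀₎ ⊗ (m₍₁₎ ⊗_H v)`, is invertible,
with inverse (induced by) `m ⊗ c ⊗_H v ↦ (m₍₁₎ ∧ c)·v ⊗ m₍₀₎`. -/
theorem genYD_halfBraid_invertible
    {H : Type} [Ring H] [HopfAlgebra k H]
    {K : Type} [Ring K] [HopfAlgebra k K]
    {A : Type} [Ring A] [Algebra k A]
    {C : Type} [AddCommGroup C] [Module k C] [Coalgebra k C]
    {M : Type} [AddCommGroup M] [Module k M]
    (ΔL : A →ₗ[k] H ⊗[k] A) (ΔR : A →ₗ[k] A ⊗[k] K)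
    (actL : K ⊗[k] C →ₗ[k] C) (actR : C ⊗[k] H →ₗ[k] C)
    (μ : A ⊗[k] M →ₗ[k] M) (ρ : M →ₗ[k] M ⊗[k] C)
    -- the Morita maps `∧` and `∨` of the bi-Galois co-object `C` and their identities
    (wedge : C ⊗[k] C →ₗ[k] H) (vee : C ⊗[k] C →ₗ[k] K)
    (hwedge_counit : wedge ∘ₗ comul (R := k) (A := C)
        = (Algebra.linearMap k H) ∘ₗ counit (R := k) (A := C))
    (hvee_counit : vee ∘ₗ comul (R := k) (A := C)
        = (Algebra.linearMap k K) ∘ₗ counit (R := k) (A := C))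
    (hwedgevee : ∀ c d e : C, actR (c ⊗ₜ wedge (d ⊗ₜ e)) = actL (vee (c ⊗ₜ d) ⊗ₜ e))
    (hwedgeH : ∀ (c d : C) (h : H), wedge (c ⊗ₜ actR (d ⊗ₜ h)) = wedge (c ⊗ₜ d) * h)
    -- `M` is a right `C`-comodule, a left `A`-module, and a YD module
    (hρcoassoc : (TensorProduct.assoc k M C C).toLinearMap ∘ₗ
        (LinearMap.rTensor C ρ) ∘ₗ ρ = (LinearMap.lTensor M (comul (R := k) (A := C))) ∘ₗ ρ)
    (hρcounit : (TensorProduct.rid k M).toLinearMap ∘ₗ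
        (LinearMap.lTensor M (counit (R := k) (A := C))) ∘ₗ ρ = LinearMap.id)
    (hμone : ∀ m : M, μ (1 ⊗ₜ m) = m)
    (hμmul : ∀ (a b : A) (m : M), μ ((a * b) ⊗ₜ m) = μ (a ⊗ₜ μ (b ⊗ₜ m)))
    (hYD : (LinearMap.lTensor M actR) ∘ₗ (TensorProduct.assoc k M C H).toLinearMap ∘ₗ
        (TensorProduct.comm k H (M ⊗[k] C)).toLinearMap ∘ₗ
        (LinearMap.lTensor H (ρ ∘ₗ μ)) ∘ₗ (TensorProduct.assoc k H A M).toLinearMap ∘ₗ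
        (LinearMap.rTensor M ΔL)
      = (TensorProduct.map μ actL) ∘ₗ (TensorProduct.tensorTensorTensorComm k A K M C).toLinearMap
          ∘ₗ (LinearMap.lTensor (A ⊗[k] K) ρ) ∘ₗ (LinearMap.rTensor M ΔR))
    (V : Type) [AddCommGroup V] [Module k V] [Module H V] [IsScalarTower k H V]
    [SMulCommClass k H V] :
    ∃ β' : (M ⊗[k] ((C ⊗[k] V) ⧸ balancer H C actR V)) →ₗ[k] V ⊗[k] M,
      -- `β'` is induced by `m ⊗ (c ⊗ v) ↦ (m₍₁₎ ∧ c)·v ⊗ m₍₀₎`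
      β' ∘ₗ (LinearMap.lTensor M (balancer H C actR V).mkQ)
        = (TensorProduct.comm k M V).toLinearMap ∘ₗ
          (LinearMap.lTensor M (hAct H V)) ∘ₗ
          (LinearMap.lTensor M (LinearMap.rTensor V wedge)) ∘ₗ
          (LinearMap.lTensor M (TensorProduct.assoc k C C V).symm.toLinearMap) ∘ₗ
          (TensorProduct.assoc k M C (C ⊗[k] V)).toLinearMap ∘ₗ
          (LinearMap.rTensor (C ⊗[k] V) ρ) ∧
      -- `β'` is a two-sided inverse for `β_{V,M}`
      β' ∘ₗ ((LinearMap.lTensor M (balancer H C actR V).mkQ) ∘ₗ betaRaw ρ V)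
        = LinearMap.id ∧
      ((LinearMap.lTensor M (balancer H C actR V).mkQ) ∘ₗ betaRaw ρ V) ∘ₗ β'
        = LinearMap.id := by
  classical
  set N := balancer H C actR V with hNdef
  -- pointwise versions
  have hact : ∀ (h : H) (w : V), hAct H V (h ⊗ₜ[k] w) = h • w := fun h w => rfl
  have hco : ∀ m : M, (TensorProduct.assoc k M C C) (LinearMap.rTensor C ρ (ρ m))
      = LinearMap.lTensor M (comul (R := k)) (ρ m) := fun m => LinearMap.congr_fun hρcoassoc m
  have hco' : ∀ m : M, LinearMap.rTensor C ρ (ρ m)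
      = (TensorProduct.assoc k M C C).symm (LinearMap.lTensor M (comul (R := k)) (ρ m)) := by
    intro m
    rw [LinearEquiv.eq_symm_apply]
    exact hco m
  have hcu : ∀ m : M, (TensorProduct.rid k M) (LinearMap.lTensor M (counit (R := k)) (ρ m)) = m :=
    fun m => LinearMap.congr_fun hρcounit m
  have hwc : ∀ c : C, wedge (comul (R := k) c) = algebraMap k H (counit c) :=
    fun c => LinearMap.congr_fun hwedge_counit c
  have hvc : ∀ c : C, vee (comul (R := k) c) = algebraMap k K (counit c) :=
    fun c => LinearMap.congr_fun hvee_counit c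
  have hbal : ∀ (a : C) (h : H) (w : V), N.mkQ (actR (a ⊗ₜ h) ⊗ₜ w) = N.mkQ (a ⊗ₜ (h • w)) := by
    intro a h w
    rw [← sub_eq_zero, ← map_sub, Submodule.mkQ_apply, Submodule.Quotient.mk_eq_zero]
    exact Submodule.subset_span ⟨a, h, w, rfl⟩

  -- the candidate inverse at the level of M ⊗ (C ⊗ V)
  set g : M ⊗[k] (C ⊗[k] V) →ₗ[k] V ⊗[k] M :=
    (TensorProduct.comm k M V).toLinearMap ∘ₗ
      (LinearMap.lTensor M (hAct H V)) ∘ₗ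
      (LinearMap.lTensor M (LinearMap.rTensor V wedge)) ∘ₗ
      (LinearMap.lTensor M (TensorProduct.assoc k C C V).symm.toLinearMap) ∘ₗ
      (TensorProduct.assoc k M C (C ⊗[k] V)).toLinearMap ∘ₗ
      (LinearMap.rTensor (C ⊗[k] V) ρ) with hgdef
  set gcore : (M ⊗[k] C) ⊗[k] (C ⊗[k] V) →ₗ[k] V ⊗[k] M :=
    (TensorProduct.comm k M V).toLinearMap ∘ₗ
      (LinearMap.lTensor M (hAct H V)) ∘ₗ
      (LinearMap.lTensor M (LinearMap.rTensor V wedge)) ∘ₗ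
      (LinearMap.lTensor M (TensorProduct.assoc k C C V).symm.toLinearMap) ∘ₗ
      (TensorProduct.assoc k M C (C ⊗[k] V)).toLinearMap with hgcdef
  have hgcore : ∀ (m' : M) (c' c : C) (v : V),
      gcore ((m' ⊗ₜ c') ⊗ₜ (c ⊗ₜ v)) = (wedge (c' ⊗ₜ c) • v) ⊗ₜ[k] m' := by
    intro m' c' c v
    simp [hgcdef, hact]
  have hg_tmul : ∀ (m : M) (x : C ⊗[k] V), g (m ⊗ₜ x) = gcore ((ρ m) ⊗ₜ x) := by
    intro m x
    simp [hgdef, hgcdef]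

  -- g kills the balancer in the second factor
  have hgN : ∀ (m : M) (x : C ⊗[k] V), x ∈ N → g (m ⊗ₜ x) = 0 := by
    intro m x hx
    induction hx using Submodule.span_induction with
    | mem x hxmem =>
      obtain ⟨c, h, v, rfl⟩ := hxmem
      have key : ∀ t : M ⊗[k] C,
          gcore (t ⊗ₜ (actR (c ⊗ₜ h) ⊗ₜ v)) = gcore (t ⊗ₜ (c ⊗ₜ (h • v))) := by
        intro t
        induction t with
        | zero => simp
        | add a b ha hb => simp [add_tmul, ha, hb]
        | tmul m' c' => rw [hgcore, hgcore, hwedgeH, mul_smul]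
      rw [tmul_sub, map_sub, hg_tmul, hg_tmul, key, sub_self]
    | zero => simp
    | add x y _ _ hx' hy' => rw [tmul_add, map_add, hx', hy', add_zero]
    | smul a x _ hx' => rw [tmul_smul, map_smul, hx', smul_zero]
  have hker : ∀ m : M, N ≤ LinearMap.ker (g ∘ₗ TensorProduct.mk k M (C ⊗[k] V) m) := by
    intro m x hx
    simpa using hgN m x hx
  set B : M →ₗ[k] ((C ⊗[k] V) ⧸ N) →ₗ[k] V ⊗[k] M :=
    { toFun := fun m => N.liftQ (g ∘ₗ TensorProduct.mk k M (C ⊗[k] V) m) (hker m)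
      map_add' := by
        intro m m'
        apply Submodule.linearMap_qext
        ext x
        simp [add_tmul]
      map_smul' := by
        intro a m
        apply Submodule.linearMap_qext
        ext x
        simp [← smul_tmul'] } with hBdef
  set β' : (M ⊗[k] ((C ⊗[k] V) ⧸ N)) →ₗ[k] V ⊗[k] M := TensorProduct.lift B with hβdef
  have hβmk : ∀ (m : M) (x : C ⊗[k] V), β' (m ⊗ₜ N.mkQ x) = g (m ⊗ₜ x) := by
    intro m x
    rw [hβdef]
    rw [TensorProduct.lift.tmul]
    rw [hBdef]
    simp only [LinearMap.coe_mk, AddHom.coe_mk, Submodule.mkQ_apply, Submodule.liftQ_apply,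
      LinearMap.comp_apply, TensorProduct.mk_apply]
  have prop1 : β' ∘ₗ (LinearMap.lTensor M N.mkQ) = g := by
    apply TensorProduct.ext'
    intro m x
    rw [LinearMap.comp_apply, LinearMap.lTensor_tmul]
    exact hβmk m x

  -- β' ∘ β = id
  have hgβ : g ∘ₗ betaRaw ρ V = LinearMap.id := by
    apply TensorProduct.ext'
    intro v m
    have hβraw : betaRaw ρ V (v ⊗ₜ m) = (TensorProduct.assoc k M C V) ((ρ m) ⊗ₜ v) := by
      simp [betaRaw]
    -- E : ((M ⊗ C) ⊗ C) → V ⊗ M,  (m'' ⊗ c'') ⊗ c' ↦ (wedge (c'' ⊗ c') • v) ⊗ m''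
    set χ' : C ⊗[k] C →ₗ[k] V :=
      hAct H V ∘ₗ ((TensorProduct.mk k H V).flip v) ∘ₗ wedge with hχ'def
    have hχ' : ∀ y : C ⊗[k] C, χ' y = wedge y • v := by
      intro y; simp [hχ'def, hact]
    set E : ((M ⊗[k] C) ⊗[k] C) →ₗ[k] V ⊗[k] M :=
      (TensorProduct.comm k M V).toLinearMap ∘ₗ (LinearMap.lTensor M χ') ∘ₗ
        (TensorProduct.assoc k M C C).toLinearMap with hEdef
    have hE : ∀ (m'' : M) (c'' c' : C), E ((m'' ⊗ₜ c'') ⊗ₜ c') = (wedge (c'' ⊗ₜ c') • v) ⊗ₜ[k] m'' := by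
      intro m'' c'' c'; simp [hEdef, hχ']
    have claim1' : ∀ (c' : C) (s : M ⊗[k] C),
        gcore (s ⊗ₜ (c' ⊗ₜ v)) = E (s ⊗ₜ c') := by
      intro c' s
      induction s with
      | zero => simp
      | add a b ha hb => simp [add_tmul, ha, hb]
      | tmul m'' c'' => rw [hgcore, hE]
    have claim1 : ∀ t : M ⊗[k] C,
        g ((TensorProduct.assoc k M C V) (t ⊗ₜ v)) = E (LinearMap.rTensor C ρ t) := by
      intro t
      induction t with
      | zero => simp
      | add a b ha hb => simp only [add_tmul, map_add, ha, hb]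
      | tmul m' c' =>
        rw [TensorProduct.assoc_tmul, hg_tmul, claim1', LinearMap.rTensor_tmul]
    have hEF : ∀ z : M ⊗[k] (C ⊗[k] C),
        E ((TensorProduct.assoc k M C C).symm z)
          = (TensorProduct.comm k M V) (LinearMap.lTensor M χ' z) := by
      intro z; simp [hEdef]
    have claim2 : ∀ t : M ⊗[k] C,
        (TensorProduct.comm k M V) (LinearMap.lTensor M χ' (LinearMap.lTensor M (comul (R := k)) t))
          = v ⊗ₜ[k] ((TensorProduct.rid k M) (LinearMap.lTensor M (counit (R := k)) t)) := by
      intro t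
      induction t with
      | zero => simp
      | add a b ha hb => simp only [map_add, ha, hb, tmul_add]
      | tmul m' c' =>
        rw [LinearMap.lTensor_tmul, LinearMap.lTensor_tmul, LinearMap.lTensor_tmul]
        have : χ' (comul (R := k) c') = counit (R := k) c' • v := by
          rw [hχ', hwc, Algebra.algebraMap_eq_smul_one, smul_assoc, one_smul]
        rw [this, TensorProduct.comm_tmul, TensorProduct.rid_tmul, smul_tmul]
    rw [LinearMap.comp_apply, hβraw, claim1, hco', hEF, claim2, hcu, LinearMap.id_apply]
  have prop2 : β' ∘ₗ ((LinearMap.lTensor M N.mkQ) ∘ₗ betaRaw ρ V) = LinearMap.id := by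
    rw [← LinearMap.comp_assoc, prop1, hgβ]

  have hβrawg : ∀ (v' : V) (m' : M),
      betaRaw ρ V (v' ⊗ₜ m') = (TensorProduct.assoc k M C V) ((ρ m') ⊗ₜ v') := by
    intro v' m'; simp [betaRaw]
  have hsurj : Function.Surjective (LinearMap.lTensor M N.mkQ) :=
    LinearMap.lTensor_surjective M N.mkQ_surjective
  have prop3 : ((LinearMap.lTensor M N.mkQ) ∘ₗ betaRaw ρ V) ∘ₗ β' = LinearMap.id := by
    rw [← LinearMap.cancel_right hsurj, LinearMap.comp_assoc, prop1, LinearMap.id_comp]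
    apply TensorProduct.ext'
    intro m x
    induction x with
    | zero => rw [tmul_zero, map_zero, map_zero]
    | add a b ha hb => rw [tmul_add, map_add, map_add, ha, hb]
    | tmul c v =>
      set χ : C →ₗ[k] V :=
        hAct H V ∘ₗ ((TensorProduct.mk k H V).flip v) ∘ₗ wedge ∘ₗ ((TensorProduct.mk k C C).flip c)
        with hχdef
      have hχ : ∀ c' : C, χ c' = wedge (c' ⊗ₜ c) • v := by
        intro c'; simp [hχdef, hact]
      set χ2 : C ⊗[k] C →ₗ[k] V :=
        hAct H V ∘ₗ ((TensorProduct.mk k H V).flip v) ∘ₗ wedge with hχ2def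
      have hχ2 : ∀ y : C ⊗[k] C, χ2 y = wedge y • v := by
        intro y; simp [hχ2def, hact]
      set S2 : ((M ⊗[k] C) ⊗[k] C) →ₗ[k] M ⊗[k] ((C ⊗[k] V) ⧸ N) :=
        (LinearMap.lTensor M N.mkQ) ∘ₗ (LinearMap.lTensor M (LinearMap.lTensor C χ)) ∘ₗ
          (TensorProduct.assoc k M C C).toLinearMap with hS2def
      have hS2 : ∀ (m'' : M) (c'' c' : C),
          S2 ((m'' ⊗ₜ c'') ⊗ₜ c') = m'' ⊗ₜ[k] N.mkQ (c'' ⊗ₜ (wedge (c' ⊗ₜ c) • v)) := by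
        intro m'' c'' c'; simp [hS2def, hχ]
      have claim3' : ∀ (c' : C) (s : M ⊗[k] C),
          (LinearMap.lTensor M N.mkQ) ((TensorProduct.assoc k M C V) (s ⊗ₜ (wedge (c' ⊗ₜ c) • v)))
            = S2 (s ⊗ₜ c') := by
        intro c' s
        induction s with
        | zero => simp
        | add a b ha hb => simp only [add_tmul, map_add, ha, hb]
        | tmul m'' c'' => rw [TensorProduct.assoc_tmul, LinearMap.lTensor_tmul, hS2]
      have claim3 : ∀ t : M ⊗[k] C,
          (LinearMap.lTensor M N.mkQ) (betaRaw ρ V (gcore (t ⊗ₜ (c ⊗ₜ v))))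
            = S2 (LinearMap.rTensor C ρ t) := by
        intro t
        induction t with
        | zero => simp
        | add a b ha hb => simp only [add_tmul, map_add, ha, hb]
        | tmul m' c' =>
          rw [hgcore, hβrawg, LinearMap.rTensor_tmul, claim3']
      have hS2symm : ∀ z : M ⊗[k] (C ⊗[k] C),
          S2 ((TensorProduct.assoc k M C C).symm z)
            = (LinearMap.lTensor M N.mkQ) (LinearMap.lTensor M (LinearMap.lTensor C χ) z) := by
        intro z; simp [hS2def]
      have hp : ∀ y : C ⊗[k] C,
          N.mkQ (LinearMap.lTensor C χ y) = N.mkQ (actL (vee y ⊗ₜ c) ⊗ₜ v) := by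
        intro y
        induction y with
        | zero => simp
        | add a b ha hb => simp only [map_add, add_tmul, ha, hb]
        | tmul a b => rw [LinearMap.lTensor_tmul, hχ, ← hbal, hwedgevee]
      have claim4 : ∀ t : M ⊗[k] C,
          (LinearMap.lTensor M N.mkQ)
              (LinearMap.lTensor M (LinearMap.lTensor C χ) (LinearMap.lTensor M (comul (R := k)) t))
            = ((TensorProduct.rid k M) (LinearMap.lTensor M (counit (R := k)) t))
                ⊗ₜ[k] N.mkQ (actL ((1 : K) ⊗ₜ c) ⊗ₜ v) := by
        intro t
        induction t with
        | zero => simp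
        | add a b ha hb => simp only [map_add, add_tmul, ha, hb]
        | tmul m' c' =>
          rw [LinearMap.lTensor_tmul, LinearMap.lTensor_tmul, LinearMap.lTensor_tmul, hp, hvc,
            Algebra.algebraMap_eq_smul_one, ← smul_tmul', map_smul, ← smul_tmul', map_smul,
            tmul_smul, LinearMap.lTensor_tmul, TensorProduct.rid_tmul, ← smul_tmul']
      have claim5 : N.mkQ (actL ((1 : K) ⊗ₜ c) ⊗ₜ v) = N.mkQ (c ⊗ₜ v) := by
        have h1 : actL ((1 : K) ⊗ₜ[k] c)
            = actL (LinearMap.rTensor C vee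
                (LinearMap.rTensor C (comul (R := k)) (comul (R := k) c))) := by
          rw [← LinearMap.rTensor_comp_apply, hvee_counit, LinearMap.rTensor_comp_apply,
            Coalgebra.rTensor_counit_comul, LinearMap.rTensor_tmul, Algebra.linearMap_apply,
            map_one]
        have hq : ∀ z : (C ⊗[k] C) ⊗[k] C,
            actL (LinearMap.rTensor C vee z)
              = actR (LinearMap.lTensor C wedge ((TensorProduct.assoc k C C C) z)) := by
          intro z
          induction z with
          | zero => simp
          | add a b ha hb => simp only [map_add, ha, hb]
          | tmul y d =>
            induction y with
            | zero => simp
            | add a b ha hb => simp only [add_tmul, map_add, ha, hb]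
            | tmul a b =>
              rw [LinearMap.rTensor_tmul, TensorProduct.assoc_tmul, LinearMap.lTensor_tmul]
              exact (hwedgevee a b d).symm
        have hr12 : ∀ z : C ⊗[k] (C ⊗[k] C),
            N.mkQ (actR (LinearMap.lTensor C wedge z) ⊗ₜ v)
              = N.mkQ (LinearMap.lTensor C χ2 z) := by
          intro z
          induction z with
          | zero => simp
          | add a b ha hb => simp only [map_add, add_tmul, ha, hb]
          | tmul a y => rw [LinearMap.lTensor_tmul, LinearMap.lTensor_tmul, hbal, hχ2]
        have hfin : ∀ y : C ⊗[k] C,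
            N.mkQ (LinearMap.lTensor C χ2 (LinearMap.lTensor C (comul (R := k)) y))
              = N.mkQ (LinearMap.lTensor C
                  (LinearMap.toSpanSingleton k V v ∘ₗ counit (R := k)) y) := by
          intro y
          induction y with
          | zero => simp
          | add a b ha hb => simp only [map_add, ha, hb]
          | tmul a d =>
            rw [LinearMap.lTensor_tmul, LinearMap.lTensor_tmul, LinearMap.lTensor_tmul]
            have : χ2 (comul (R := k) d) = counit (R := k) d • v := by
              rw [hχ2, hwc, Algebra.algebraMap_eq_smul_one, smul_assoc, one_smul]
            rw [this, LinearMap.comp_apply, LinearMap.toSpanSingleton_apply]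
        calc N.mkQ (actL ((1 : K) ⊗ₜ c) ⊗ₜ v)
            = N.mkQ (actR (LinearMap.lTensor C wedge
                (LinearMap.lTensor C (comul (R := k)) (comul (R := k) c))) ⊗ₜ v) := by
              rw [h1, hq, Coalgebra.coassoc_apply]
          _ = N.mkQ (LinearMap.lTensor C χ2 (LinearMap.lTensor C (comul (R := k)) (comul (R := k) c))) :=
              hr12 _
          _ = N.mkQ (LinearMap.lTensor C
                (LinearMap.toSpanSingleton k V v ∘ₗ counit (R := k)) (comul (R := k) c)) := hfin _
          _ = N.mkQ (c ⊗ₜ v) := by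
              rw [LinearMap.lTensor_comp, LinearMap.comp_apply, Coalgebra.lTensor_counit_comul,
                LinearMap.lTensor_tmul, LinearMap.toSpanSingleton_apply, one_smul]
      rw [LinearMap.comp_apply, LinearMap.comp_apply, hg_tmul, claim3, hco', hS2symm, claim4,
        hcu, claim5, LinearMap.lTensor_tmul]
  exact ⟨β', prop1, prop2, prop3⟩
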